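/- Let $J \ge 3$, let $Q_*$ be the regular $J$-gon centered at the origin, and let $G$ be a subgroup of $D_J$. The natural action of $G$ on the set $\mathbb{Z}_J$ of boundary segments of $Q_*$ is transitive if and only if $G = D_J$, $G = Rot_J$, or ($J$ is even and $G = D_{J/2}^V$). -/

import Mathlib

open Complex Real Set

noncomputable section

abbrev Iso2 := ℂ ≃ₗᵢ[ℝ] ℂ

/-- Rotation about the origin by angle `θ`, as a linear isometry of `ℝ² = ℂ`. -/
def rotIso (θ : ℝ) : Iso2 := rotation (Circle.exp θ)

/-- Reflection `R_θ` in the line `{(t cos θ, t sin θ) : t ∈ ℝ}` through the origin. -/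
def reflIso (θ : ℝ) : Iso2 := rotIso (2 * θ) * Complex.conjLIE

/-- The vertex `p_i` of the regular `J`-gon. -/
def vertex (J : ℕ) (i : ℤ) : ℂ :=
  (1 / Real.cos (π / J)) • Complex.exp ((π / J + 2 * π * i / J - π / 2) * Complex.I)

/-- The boundary segment `b_i` of the regular `J`-gon, joining `p_{i-1}` and `p_i`. -/
def edge (J : ℕ) (i : ℤ) : Set ℂ := segment ℝ (vertex J (i - 1)) (vertex J i)

/-- The (solid) regular `J`-gon `Q_*^{(J)}`. -/
def polyQ (J : ℕ) : Set ℂ :=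
  {z | ∃ t ∈ Icc (0 : ℝ) 1, ∃ i : ℤ, ∃ y ∈ edge J i, z = t • y}

/-- The symmetry group `D_J` of the regular `J`-gon, as a subset of `O(2)`
(the group of linear isometries of the plane). -/
def DJ (J : ℕ) : Set Iso2 := {g | g '' polyQ J = polyQ J}

/-- The rotation group `Rot_J`. -/
def RotJ (J : ℕ) : Set Iso2 := {g | ∃ i : ℤ, g = rotIso (2 * π * i / J)}

/-- `D_J^*`: the subgroup of `O(2)` generated by `D_J` and the reflections
`R_{ρ(i)}` in the lines through the origin parallel to the edges `b_i`. -/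
def DJstar (J : ℕ) : Subgroup Iso2 :=
  Subgroup.closure (DJ J ∪ {g | ∃ i : ℤ, g = reflIso (2 * π * i / J)})

/-- For even `J`, `D_{J/2}^V = Rot_{J/2} ∪ {R_{θ_i} : i}` with `θ_i = 2πi/J + π/J - π/2`. -/
def DHalfV (J : ℕ) : Set Iso2 :=
  {g | ∃ i : ℤ, g = rotIso (4 * π * i / J)} ∪
    {g | ∃ i : ℤ, g = reflIso (2 * π * i / J + π / J - π / 2)}

namespace S2aux

def θv (J : ℕ) (i : ℤ) : ℝ := π / J + 2 * π * i / J - π / 2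

lemma rotIso_apply (a : ℝ) (z : ℂ) : rotIso a z = Complex.exp (a * Complex.I) * z := by
  simp [rotIso, rotation_apply, Circle.coe_exp]

lemma reflIso_apply (a : ℝ) (z : ℂ) :
    reflIso a z = Complex.exp ((2*a : ℝ) * Complex.I) * (starRingEnd ℂ) z := by
  simp [reflIso, LinearIsometryEquiv.coe_mul, rotIso_apply, Function.comp]

lemma vertex_eq (J : ℕ) (i : ℤ) :
    vertex J i = (1 / Real.cos (π / J)) • Complex.exp ((θv J i : ℝ) * Complex.I) := by
  rw [vertex, θv]; push_cast; ring_nf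

lemma θv_add (J : ℕ) (i k : ℤ) : θv J (i + k) = θv J i + 2 * π * k / J := by
  simp only [θv]; push_cast; ring

lemma rot_vertex (J : ℕ) (k i : ℤ) :
    rotIso (2 * π * k / J) (vertex J i) = vertex J (i + k) := by
  rw [vertex_eq, vertex_eq, rotIso_apply, θv_add]
  rw [Complex.real_smul, Complex.real_smul, ← mul_assoc, mul_comm (Complex.exp _),
    mul_assoc, ← Complex.exp_add]
  push_cast; ring_nf

lemma refl_vertex (J : ℕ) (m i : ℤ) :
    reflIso (π * (m + 1) / J - π / 2) (vertex J i) = vertex J (m - i) := by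
  rw [vertex_eq, vertex_eq, reflIso_apply]
  rw [Complex.real_smul, map_mul, ← Complex.exp_conj]
  rw [show ((starRingEnd ℂ) ((1 / Real.cos (π / J) : ℝ) : ℂ)) = ((1 / Real.cos (π / J) : ℝ) : ℂ)
    from Complex.conj_ofReal _]
  rw [Complex.real_smul, ← mul_assoc, mul_comm (Complex.exp _), mul_assoc, ← Complex.exp_add]
  congr 1
  rw [map_mul, Complex.conj_I, Complex.conj_ofReal]
  rw [θv, θv]; push_cast; ring_nf


lemma exp_eq_exp_real (x y : ℝ) :
    Complex.exp ((x:ℂ) * Complex.I) = Complex.exp ((y:ℂ) * Complex.I) ↔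
      ∃ n : ℤ, x = y + n * (2 * π) := by
  rw [Complex.exp_eq_exp_iff_exists_int]
  refine exists_congr fun n => ?_
  rw [← mul_assoc, ← add_mul, mul_left_inj' Complex.I_ne_zero]
  norm_cast

lemma rotIso_eq_rotIso (a b : ℝ) : rotIso a = rotIso b ↔ ∃ n : ℤ, a = b + n * (2 * π) := by
  constructor
  · intro h
    have h1 : rotIso a 1 = rotIso b 1 := by rw [h]
    rw [rotIso_apply, rotIso_apply, mul_one, mul_one] at h1
    exact (exp_eq_exp_real a b).1 h1
  · rintro ⟨n, rfl⟩
    ext z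
    rw [rotIso_apply, rotIso_apply]
    congr 1
    exact (exp_eq_exp_real _ b).2 ⟨n, rfl⟩

lemma reflIso_eq_reflIso (a b : ℝ) : reflIso a = reflIso b ↔ ∃ n : ℤ, a = b + n * π := by
  constructor
  · intro h
    have h1 : reflIso a 1 = reflIso b 1 := by rw [h]
    rw [reflIso_apply, reflIso_apply, map_one, mul_one, mul_one] at h1
    obtain ⟨n, hn⟩ := (exp_eq_exp_real _ _).1 h1
    exact ⟨n, by linarith⟩
  · rintro ⟨n, rfl⟩
    ext z
    rw [reflIso_apply, reflIso_apply]
    congr 1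
    exact (exp_eq_exp_real (2*(b + n*π)) (2*b)).2 ⟨n, by push_cast; ring⟩

lemma rotIso_ne_reflIso (a b : ℝ) : rotIso a ≠ reflIso b := by
  intro h
  have h1 : rotIso a 1 = reflIso b 1 := by rw [h]
  have h2 : rotIso a Complex.I = reflIso b Complex.I := by rw [h]
  rw [rotIso_apply, reflIso_apply, map_one, mul_one, mul_one] at h1
  rw [rotIso_apply, reflIso_apply, Complex.conj_I] at h2
  rw [h1, mul_comm, mul_neg] at h2
  have h3 : Complex.exp ((2*b:ℝ) * Complex.I) * Complex.I ≠ 0 :=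
    mul_ne_zero (Complex.exp_ne_zero _) Complex.I_ne_zero
  rw [mul_comm (Complex.exp _) Complex.I] at h2
  exact h3 (by linear_combination h2 / 2)

lemma rot_mul_rot (a b : ℝ) : rotIso a * rotIso b = rotIso (a + b) := by
  ext z
  simp only [LinearIsometryEquiv.coe_mul, Function.comp_apply, rotIso_apply, ← mul_assoc,
    ← Complex.exp_add]
  push_cast; ring_nf

lemma rot_mul_refl (a b : ℝ) : rotIso a * reflIso b = reflIso (b + a / 2) := by
  ext z
  simp only [LinearIsometryEquiv.coe_mul, Function.comp_apply, rotIso_apply, reflIso_apply,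
    ← mul_assoc, ← Complex.exp_add]
  push_cast; ring_nf

lemma refl_mul_rot (a b : ℝ) : reflIso b * rotIso a = reflIso (b - a / 2) := by
  ext z
  simp only [LinearIsometryEquiv.coe_mul, Function.comp_apply, rotIso_apply, reflIso_apply,
    map_mul, ← Complex.exp_conj, map_mul, Complex.conj_I, Complex.conj_ofReal, ← mul_assoc,
    ← Complex.exp_add]
  push_cast; ring_nf

lemma refl_mul_refl (a b : ℝ) : reflIso a * reflIso b = rotIso (2*a - 2*b) := by
  ext z
  simp only [LinearIsometryEquiv.coe_mul, Function.comp_apply, rotIso_apply, reflIso_apply,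
    map_mul, ← Complex.exp_conj, map_mul, Complex.conj_I, Complex.conj_ofReal, ← mul_assoc,
    ← Complex.exp_add, Complex.conj_conj]
  push_cast; ring_nf

lemma refl_inv (a : ℝ) : (reflIso a)⁻¹ = reflIso a := by
  rw [inv_eq_iff_mul_eq_one, refl_mul_refl]
  ext z; rw [rotIso_apply]; norm_num

lemma rot_inv (a : ℝ) : (rotIso a)⁻¹ = rotIso (-a) := by
  rw [inv_eq_iff_mul_eq_one, rot_mul_rot]
  ext z; rw [rotIso_apply]; norm_num

lemma image_seg (g : Iso2) (x y : ℂ) : g '' segment ℝ x y = segment ℝ (g x) (g y) := by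
  have := image_segment ℝ (g.toLinearEquiv.toLinearMap.toAffineMap) x y
  simpa using this

lemma rot_edge (J : ℕ) (k i : ℤ) :
    rotIso (2 * π * k / J) '' edge J i = edge J (i + k) := by
  rw [edge, edge, image_seg, rot_vertex, rot_vertex]
  congr 2
  ring

lemma refl_edge (J : ℕ) (m i : ℤ) :
    reflIso (π * (m + 1) / J - π / 2) '' edge J i = edge J (m + 1 - i) := by
  rw [edge, edge, image_seg, refl_vertex, refl_vertex, segment_symm]
  congr 2 <;> ring


lemma cos_pos {J : ℕ} (hJ : 3 ≤ J) : 0 < Real.cos (π / J) := by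
  apply Real.cos_pos_of_mem_Ioo
  constructor
  · have : 0 < π / J := div_pos pi_pos (by positivity)
    linarith [pi_pos]
  · have h3 : (3:ℝ) ≤ J := by exact_mod_cast hJ
    have : π / J ≤ π / 3 := div_le_div_of_nonneg_left pi_pos.le (by norm_num) h3
    linarith [pi_pos]

lemma c_pos {J : ℕ} (hJ : 3 ≤ J) : 0 < 1 / Real.cos (π / J) :=
  div_pos one_pos (cos_pos hJ)

lemma norm_vertex {J : ℕ} (hJ : 3 ≤ J) (i : ℤ) : ‖vertex J i‖ = 1 / Real.cos (π / J) := by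
  rw [vertex_eq, norm_smul, Complex.norm_exp_ofReal_mul_I, mul_one,
    Real.norm_of_nonneg (c_pos hJ).le]

lemma vertex_eq_vertex {J : ℕ} (hJ : 3 ≤ J) {i j : ℤ} :
    vertex J i = vertex J j ↔ (J:ℤ) ∣ i - j := by
  have hc : ((1 / Real.cos (π / J) : ℝ) : ℂ) ≠ 0 := by
    exact_mod_cast (c_pos hJ).ne'
  have hJ0 : (J:ℝ) ≠ 0 := by
    have : (3:ℝ) ≤ J := by exact_mod_cast hJ
    linarith
  have h2pi : (2:ℝ) * π ≠ 0 := by positivity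
  rw [vertex_eq, vertex_eq, Complex.real_smul, Complex.real_smul,
    mul_right_inj' hc, exp_eq_exp_real]
  constructor
  · rintro ⟨n, hn⟩
    refine ⟨n, ?_⟩
    rw [θv, θv] at hn
    have h2 : 2 * π * ((i:ℝ) / J) = 2 * π * ((j:ℝ)/J + n) := by
      rw [mul_div_assoc, mul_div_assoc] at hn
      linarith
    have h4 := mul_left_cancel₀ h2pi h2
    have h5 : (i:ℝ) = ((j:ℝ)/J + n) * J := by
      rw [← h4, div_mul_cancel₀ _ hJ0]
    have h6 : (i:ℝ) - j = J * n := by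
      rw [h5, add_mul, div_mul_cancel₀ _ hJ0]; ring
    exact_mod_cast h6
  · rintro ⟨n, hn⟩
    refine ⟨n, ?_⟩
    have hcast : (i:ℝ) = j + J * n := by
      have : i = j + J * n := by linarith
      exact_mod_cast this
    have h4 : (i:ℝ)/J = (j:ℝ)/J + n := by
      field_simp [hcast]
      linarith [hcast]
    rw [θv, θv, mul_div_assoc, mul_div_assoc, h4]
    ring

lemma vertex_ne_succ {J : ℕ} (hJ : 3 ≤ J) (i : ℤ) : vertex J (i - 1) ≠ vertex J i := by
  rw [Ne, vertex_eq_vertex hJ]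
  intro h
  have : (J:ℤ) ∣ 1 := by simpa using (dvd_neg.mpr h)
  have := Int.le_of_dvd one_pos this
  omega

lemma edge_norm_le {J : ℕ} (hJ : 3 ≤ J) {i : ℤ} {y : ℂ} (hy : y ∈ edge J i) :
    ‖y‖ ≤ 1 / Real.cos (π / J) := by
  obtain ⟨a, b, ha, hb, hab, rfl⟩ := hy
  calc ‖a • vertex J (i-1) + b • vertex J i‖ ≤ ‖a • vertex J (i-1)‖ + ‖b • vertex J i‖ :=
        norm_add_le _ _
    _ = a * (1 / Real.cos (π / J)) + b * (1 / Real.cos (π / J)) := by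
        rw [norm_smul, norm_smul, norm_vertex hJ, norm_vertex hJ,
          Real.norm_of_nonneg ha, Real.norm_of_nonneg hb]
    _ = 1 / Real.cos (π / J) := by rw [← add_mul, hab, one_mul]

lemma seg_endpoint {J : ℕ} (hJ : 3 ≤ J) {i : ℤ} {y : ℂ} (hy : y ∈ edge J i)
    (hn : ‖y‖ = 1 / Real.cos (π / J)) : y = vertex J (i-1) ∨ y = vertex J i := by
  obtain ⟨a, b, ha, hb, hab, rfl⟩ := hy
  rcases ha.eq_or_lt with h | h
  · right; rw [← h] at hab; simp [← h, show b = 1 by linarith]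
  rcases hb.eq_or_lt with h' | h'
  · left; rw [← h'] at hab; simp [← h', show a = 1 by linarith]
  exfalso
  have := norm_combo_lt_of_ne (le_of_eq (norm_vertex hJ (i-1))) (le_of_eq (norm_vertex hJ i))
    (vertex_ne_succ hJ i) h h' hab
  exact absurd hn (ne_of_lt this)

lemma mem_polyQ_norm {J : ℕ} (hJ : 3 ≤ J) {z : ℂ} (hz : z ∈ polyQ J)
    (hn : ‖z‖ = 1 / Real.cos (π / J)) : ∃ k : ℤ, z = vertex J k := by
  obtain ⟨t, ⟨ht0, ht1⟩, i, y, hy, rfl⟩ := hz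
  have hyn : ‖y‖ ≤ 1 / Real.cos (π / J) := edge_norm_le hJ hy
  rw [norm_smul, Real.norm_of_nonneg ht0] at hn
  have hc := c_pos (J := J) hJ
  have ht : t = 1 := by nlinarith
  subst ht
  rw [one_mul] at hn
  rcases seg_endpoint hJ hy hn with h | h
  · exact ⟨i - 1, by rw [one_smul, h]⟩
  · exact ⟨i, by rw [one_smul, h]⟩

lemma vertex_mem_polyQ (J : ℕ) (i : ℤ) : vertex J i ∈ polyQ J :=
  ⟨1, ⟨zero_le_one, le_refl 1⟩, i, vertex J i, right_mem_segment ℝ _ _, (one_smul ℝ _).symm⟩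


lemma polyQ_image {J : ℕ} (g : Iso2) (σ : ℤ → ℤ) (hσ : ∀ i, g '' edge J i = edge J (σ i))
    (hsur : Function.Surjective σ) : g '' polyQ J = polyQ J := by
  ext z
  constructor
  · rintro ⟨w, ⟨t, ht, i, y, hy, rfl⟩, rfl⟩
    exact ⟨t, ht, σ i, g y, by rw [← hσ]; exact ⟨y, hy, rfl⟩, map_smul g t y⟩
  · rintro ⟨t, ht, j, y', hy', rfl⟩
    obtain ⟨i, rfl⟩ := hsur j
    rw [← hσ i] at hy'
    obtain ⟨y, hy, rfl⟩ := hy'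
    exact ⟨t • y, ⟨t, ht, i, y, hy, rfl⟩, map_smul g t y⟩

lemma rot_mem_DJ (J : ℕ) (k : ℤ) : rotIso (2 * π * k / J) ∈ DJ J :=
  polyQ_image _ (fun i => i + k) (rot_edge J k) (fun j => ⟨j - k, by ring⟩)

lemma refl_mem_DJ (J : ℕ) (m : ℤ) : reflIso (π * (m + 1) / J - π / 2) ∈ DJ J :=
  polyQ_image _ (fun i => m + 1 - i) (refl_edge J m) (fun j => ⟨m + 1 - j, by ring⟩)

lemma θv_sum (J : ℕ) (k : ℤ) : θv J k + θv J 0 = 2 * (π * (k+1) / J - π / 2) := by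
  rw [θv, θv]; push_cast; ring

lemma DJ_char {J : ℕ} (hJ : 3 ≤ J) :
    DJ J = {g | ∃ k : ℤ, g = rotIso (2 * π * k / J)} ∪
      {g | ∃ m : ℤ, g = reflIso (π * (m + 1) / J - π / 2)} := by
  apply Set.Subset.antisymm
  · intro g hg
    have hc : ((1 / Real.cos (π / J) : ℝ) : ℂ) ≠ 0 := by exact_mod_cast (c_pos hJ).ne'
    have hv0 : g (vertex J 0) ∈ polyQ J := by
      rw [← hg]; exact ⟨vertex J 0, vertex_mem_polyQ J 0, rfl⟩
    have hn : ‖g (vertex J 0)‖ = 1 / Real.cos (π / J) := by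
      rw [g.norm_map, norm_vertex hJ]
    obtain ⟨k, hk⟩ := mem_polyQ_norm hJ hv0 hn
    obtain ⟨a, h | h⟩ := linear_isometry_complex g
    · left
      refine ⟨k, ?_⟩
      rw [h] at hk
      rw [rotation_apply, vertex_eq, vertex_eq, Complex.real_smul, Complex.real_smul,
        ← mul_assoc, mul_comm (a:ℂ), mul_assoc] at hk
      have ha := mul_left_cancel₀ hc hk
      have hθ : θv J k = θv J 0 + 2 * π * k / J := by
        have := θv_add J 0 k; simpa using this
      have ha2 : (a:ℂ) = Complex.exp ((2*π*k/J : ℝ) * Complex.I) := by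
        have he : Complex.exp ((θv J k : ℝ) * Complex.I) =
            Complex.exp ((θv J 0 : ℝ) * Complex.I) *
              Complex.exp ((2*π*k/J : ℝ) * Complex.I) := by
          rw [← Complex.exp_add, hθ]; push_cast; ring_nf
        rw [he, mul_comm (a:ℂ)] at ha
        exact mul_left_cancel₀ (Complex.exp_ne_zero _) ha
      rw [h]
      ext z
      rw [rotation_apply, rotIso_apply, ha2]
    · right
      refine ⟨k, ?_⟩
      rw [h] at hk
      rw [LinearIsometryEquiv.trans_apply, Complex.conjLIE_apply, rotation_apply,
        vertex_eq, vertex_eq, Complex.real_smul, Complex.real_smul, map_mul,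
        Complex.conj_ofReal, ← Complex.exp_conj, map_mul, Complex.conj_I, Complex.conj_ofReal,
        ← mul_assoc, mul_comm (a:ℂ), mul_assoc] at hk
      have ha := mul_left_cancel₀ hc hk
      have ha2 : (a:ℂ) = Complex.exp ((θv J k + θv J 0 : ℝ) * Complex.I) := by
        have he : Complex.exp ((θv J k : ℝ) * Complex.I) =
            Complex.exp ((θv J 0 : ℝ) * -Complex.I) *
              Complex.exp ((θv J k + θv J 0 : ℝ) * Complex.I) := by
          rw [← Complex.exp_add]; push_cast; ring_nf
        rw [he, mul_comm (a:ℂ)] at ha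
        exact mul_left_cancel₀ (Complex.exp_ne_zero _) ha
      rw [h]
      ext z
      rw [LinearIsometryEquiv.trans_apply, Complex.conjLIE_apply, rotation_apply,
        reflIso_apply, ha2, θv_sum]
  · rintro g (⟨k, rfl⟩ | ⟨m, rfl⟩)
    · exact rot_mem_DJ J k
    · exact refl_mem_DJ J m


lemma edge_dvd {J : ℕ} (hJ : 3 ≤ J) {a b : ℤ} (h : edge J a = edge J b) : (J:ℤ) ∣ a - b := by
  have hJ3 : (3:ℤ) ≤ J := by exact_mod_cast hJ
  have hb : vertex J b ∈ edge J a := by rw [h]; exact right_mem_segment ℝ _ _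
  have hb1 : vertex J (b-1) ∈ edge J a := by rw [h]; exact left_mem_segment ℝ _ _
  rcases seg_endpoint hJ hb (norm_vertex hJ b) with h1 | h1
  · rcases seg_endpoint hJ hb1 (norm_vertex hJ (b-1)) with h2 | h2
    · obtain ⟨u, hu⟩ := (vertex_eq_vertex hJ).1 h1
      obtain ⟨v, hv⟩ := (vertex_eq_vertex hJ).1 h2
      have : (J:ℤ) * (u - v) = 1 := by linarith
      have h3 : (J:ℤ) ∣ 1 := ⟨u - v, this.symm⟩
      have := Int.le_of_dvd one_pos h3
      omega
    · obtain ⟨u, hu⟩ := (vertex_eq_vertex hJ).1 h1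
      obtain ⟨v, hv⟩ := (vertex_eq_vertex hJ).1 h2
      have : (J:ℤ) * (u - v) = 2 := by linarith
      have h3 : (J:ℤ) ∣ 2 := ⟨u - v, this.symm⟩
      have := Int.le_of_dvd two_pos h3
      omega
  · obtain ⟨u, hu⟩ := (vertex_eq_vertex hJ).1 h1
    exact ⟨-u, by linarith⟩

lemma rot_param_eq {J : ℕ} (hJ : 3 ≤ J) {k k' : ℤ} (h : (J:ℤ) ∣ k - k') :
    rotIso (2 * π * k / J) = rotIso (2 * π * k' / J) := by
  have hJ0 : (J:ℝ) ≠ 0 := by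
    have : (3:ℝ) ≤ J := by exact_mod_cast hJ
    linarith
  obtain ⟨n, hn⟩ := h
  refine (rotIso_eq_rotIso _ _).2 ⟨n, ?_⟩
  have hk : (k:ℝ) = k' + J * n := by exact_mod_cast (by linarith : k = k' + J * n)
  rw [hk]
  field_simp

lemma refl_param_eq {J : ℕ} (hJ : 3 ≤ J) {m m' : ℤ} (h : (J:ℤ) ∣ m - m') :
    reflIso (π * (m + 1) / J - π / 2) = reflIso (π * (m' + 1) / J - π / 2) := by
  have hJ0 : (J:ℝ) ≠ 0 := by
    have : (3:ℝ) ≤ J := by exact_mod_cast hJ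
    linarith
  obtain ⟨n, hn⟩ := h
  refine (reflIso_eq_reflIso _ _).2 ⟨n, ?_⟩
  have hk : (m:ℝ) = m' + J * n := by exact_mod_cast (by linarith : m = m' + J * n)
  rw [hk]
  field_simp
  ring

lemma rotIso_zero : rotIso 0 = 1 := by
  ext z
  rw [rotIso_apply]
  norm_num

end S2aux

open S2aux

/-- Proposition 6.3: a subgroup `G ≤ D_J` acts transitively on the edges
`ℤ_J` of `Q_*` if and only if `G = D_J`, `G = Rot_J`, or `J` is even and `G = D_{J/2}^V`. -/
theorem statement2 (J : ℕ) (hJ : 3 ≤ J) (G : Subgroup Iso2)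
    (hsub : (G : Set Iso2) ⊆ DJ J) :
    (∀ i j : ℤ, ∃ g ∈ G, g '' edge J i = edge J j) ↔
      ((G : Set Iso2) = DJ J ∨ (G : Set Iso2) = RotJ J ∨
        (Even J ∧ (G : Set Iso2) = DHalfV J)) := by
  have hJ3 : (3:ℤ) ≤ (J:ℤ) := by exact_mod_cast hJ
  have hRSadd : ∀ k k' : ℤ, rotIso (2 * π * k / J) ∈ G → rotIso (2 * π * k' / J) ∈ G →
      rotIso (2 * π * ((k + k' : ℤ)) / J) ∈ G := by
    intro k k' h1 h2
    have e : rotIso (2 * π * (k:ℝ) / J) * rotIso (2 * π * (k':ℝ) / J)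
        = rotIso (2 * π * ((k + k' : ℤ) : ℝ) / J) := by
      rw [rot_mul_rot]; congr 1; push_cast; ring
    rw [← e]
    exact mul_mem h1 h2
  have hTT : ∀ m m' : ℤ, reflIso (π * (m + 1) / J - π / 2) ∈ G →
      reflIso (π * (m' + 1) / J - π / 2) ∈ G →
      rotIso (2 * π * ((m - m' : ℤ)) / J) ∈ G := by
    intro m m' h1 h2
    have e : reflIso (π * ((m:ℝ) + 1) / J - π / 2) * reflIso (π * ((m':ℝ) + 1) / J - π / 2)
        = rotIso (2 * π * ((m - m' : ℤ) : ℝ) / J) := by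
      rw [refl_mul_refl]; congr 1; push_cast; ring
    rw [← e]
    exact mul_mem h1 h2
  have hST : ∀ k m : ℤ, rotIso (2 * π * k / J) ∈ G → reflIso (π * (m + 1) / J - π / 2) ∈ G →
      reflIso (π * ((m + k : ℤ) + 1) / J - π / 2) ∈ G := by
    intro k m h1 h2
    have e : rotIso (2 * π * (k:ℝ) / J) * reflIso (π * ((m:ℝ) + 1) / J - π / 2)
        = reflIso (π * (((m + k : ℤ) : ℝ) + 1) / J - π / 2) := by
      rw [rot_mul_refl]; congr 1; push_cast; ring
    rw [← e]
    exact mul_mem h1 h2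
  constructor
  · -- forward direction
    intro H
    have htrans : ∀ i j : ℤ,
        (∃ k : ℤ, rotIso (2 * π * k / J) ∈ G ∧ (J:ℤ) ∣ i + k - j) ∨
        (∃ m : ℤ, reflIso (π * (m + 1) / J - π / 2) ∈ G ∧ (J:ℤ) ∣ m + 1 - i - j) := by
      intro i j
      obtain ⟨g, hgG, hge⟩ := H i j
      have hgD := hsub hgG
      rw [DJ_char hJ] at hgD
      rcases hgD with ⟨k, rfl⟩ | ⟨m, rfl⟩
      · left
        refine ⟨k, hgG, ?_⟩
        rw [rot_edge J k i] at hge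
        obtain ⟨u, hu⟩ := edge_dvd hJ hge
        exact ⟨u, by linarith⟩
      · right
        refine ⟨m, hgG, ?_⟩
        rw [refl_edge J m i] at hge
        obtain ⟨u, hu⟩ := edge_dvd hJ hge
        exact ⟨u, by linarith⟩
    by_cases hA : ∀ r : ℤ, ∃ k : ℤ, rotIso (2 * π * k / J) ∈ G ∧ (J:ℤ) ∣ k - r
    · by_cases hT : ∃ m : ℤ, reflIso (π * (m + 1) / J - π / 2) ∈ G
      · -- G = DJ
        left
        refine Set.Subset.antisymm hsub ?_
        intro g hg
        rw [DJ_char hJ] at hg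
        rcases hg with ⟨k, rfl⟩ | ⟨m', rfl⟩
        · obtain ⟨k', hk', hd⟩ := hA k
          rw [rot_param_eq hJ (show (J:ℤ) ∣ k - k' by
            obtain ⟨u, hu⟩ := hd; exact ⟨-u, by linarith⟩)]
          exact hk'
        · obtain ⟨m, hm⟩ := hT
          obtain ⟨k, hk, hd⟩ := hA (m' - m)
          rw [refl_param_eq hJ (show (J:ℤ) ∣ m' - (m + k) by
            obtain ⟨u, hu⟩ := hd; exact ⟨-u, by linarith⟩)]
          exact hST k m hk hm
      · -- G = RotJ
        right; left
        apply Set.Subset.antisymm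
        · intro g hg
          have hgD := hsub hg
          rw [DJ_char hJ] at hgD
          rcases hgD with ⟨k, rfl⟩ | ⟨m, rfl⟩
          · exact ⟨k, rfl⟩
          · exact absurd ⟨m, hg⟩ hT
        · rintro g ⟨i, rfl⟩
          obtain ⟨k, hk, hd⟩ := hA i
          rw [rot_param_eq hJ (show (J:ℤ) ∣ i - k by
            obtain ⟨u, hu⟩ := hd; exact ⟨-u, by linarith⟩)]
          exact hk
    · -- Case B : G = DHalfV
      push_neg at hA
      obtain ⟨r, hr⟩ := hA
      have hcov : ∀ x : ℤ,
          (∃ k : ℤ, rotIso (2 * π * k / J) ∈ G ∧ (J:ℤ) ∣ k - x) ∨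
          (∃ m : ℤ, reflIso (π * (m + 1) / J - π / 2) ∈ G ∧ (J:ℤ) ∣ m + 1 - x) := by
        intro x
        rcases htrans 0 x with ⟨k, hk, hd⟩ | ⟨m, hm, hd⟩
        · exact Or.inl ⟨k, hk, by obtain ⟨u, hu⟩ := hd; exact ⟨u, by linarith⟩⟩
        · exact Or.inr ⟨m, hm, by obtain ⟨u, hu⟩ := hd; exact ⟨u, by linarith⟩⟩
      have hdouble : ∀ x : ℤ, ∃ k : ℤ, rotIso (2 * π * k / J) ∈ G ∧ (J:ℤ) ∣ k - 2 * x := by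
        intro x
        rcases hcov x with ⟨k, hk, hd⟩ | ⟨m, hm, hd⟩
        · exact ⟨k + k, hRSadd k k hk hk,
            by obtain ⟨u, hu⟩ := hd; exact ⟨u + u, by linarith⟩⟩
        · rcases hcov (2 * x) with h | ⟨m', hm', hd'⟩
          · exact h
          · refine ⟨(m' - m) + (m' - m), hRSadd _ _ (hTT m' m hm' hm) (hTT m' m hm' hm), ?_⟩
            obtain ⟨u, hu⟩ := hd
            obtain ⟨v, hv⟩ := hd'
            exact ⟨2 * v - 2 * u, by linarith⟩
      obtain ⟨m0, hm0, hm0d⟩ : ∃ m : ℤ, reflIso (π * (m + 1) / J - π / 2) ∈ G ∧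
          (J:ℤ) ∣ m + 1 - r := by
        rcases hcov r with ⟨k, hk, hd⟩ | h
        · exact absurd hd (hr k hk)
        · exact h
      have hJeven : Even J := by
        by_contra hodd
        obtain ⟨s, hs⟩ := Nat.not_even_iff_odd.1 hodd
        have hsZ : (J:ℤ) = 2 * s + 1 := by exact_mod_cast hs
        obtain ⟨k, hk, hd⟩ := hdouble (r * ((s:ℤ) + 1))
        refine hr k hk ?_
        obtain ⟨u, hu⟩ := hd
        exact ⟨u + r, by linear_combination hu - r * hsZ⟩
      obtain ⟨t, ht⟩ := hJeven
      have htZ : (J:ℤ) = t + t := by exact_mod_cast ht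
      have keyS : ∀ k : ℤ, rotIso (2 * π * k / J) ∈ G → Even k := by
        intro k hk
        by_contra hke
        obtain ⟨w, hw⟩ := Int.not_even_iff_odd.1 hke
        rcases Int.even_or_odd r with ⟨y, hy⟩ | ⟨y, hy⟩
        · obtain ⟨k', hk', hd⟩ := hdouble y
          exact hr k' hk' (by obtain ⟨u, hu⟩ := hd; exact ⟨u, by linarith⟩)
        · obtain ⟨k'', hk'', hd⟩ := hdouble (y - w)
          refine hr (k'' + k) (hRSadd k'' k hk'' hk) ?_
          obtain ⟨u, hu⟩ := hd
          exact ⟨u, by linarith⟩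
      have keyT : ∀ m : ℤ, reflIso (π * (m + 1) / J - π / 2) ∈ G → Even m := by
        intro m hm
        by_contra hme
        obtain ⟨w, hw⟩ := Int.not_even_iff_odd.1 hme
        obtain ⟨k', hk', hd⟩ := hdouble (w + 1)
        rcases hcov r with ⟨k, hk, hdk⟩ | ⟨m'', hm'', hd''⟩
        · exact hr k hk hdk
        · refine hr ((m'' - m) + k') (hRSadd _ _ (hTT m'' m hm'' hm) hk') ?_
          obtain ⟨u, hu⟩ := hd
          obtain ⟨v, hv⟩ := hd''
          exact ⟨v + u, by linarith⟩
      right; right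
      refine ⟨⟨t, ht⟩, Set.Subset.antisymm ?_ ?_⟩
      · intro g hg
        have hgD := hsub hg
        rw [DJ_char hJ] at hgD
        rcases hgD with ⟨k, rfl⟩ | ⟨m, rfl⟩
        · obtain ⟨i, hi⟩ := keyS k hg
          refine Or.inl ⟨i, ?_⟩
          congr 1
          have : (k:ℝ) = i + i := by exact_mod_cast hi
          rw [this]; ring
        · obtain ⟨i, hi⟩ := keyT m hg
          refine Or.inr ⟨i, ?_⟩
          congr 1
          have : (m:ℝ) = i + i := by exact_mod_cast hi
          rw [this]; ring
      · rintro g (⟨i, rfl⟩ | ⟨i, rfl⟩)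
        · obtain ⟨k, hk, hd⟩ := hdouble i
          have e : (4 * π * (i:ℝ) / J) = 2 * π * ((2 * i : ℤ) : ℝ) / J := by
            push_cast; ring
          rw [e, rot_param_eq hJ (show (J:ℤ) ∣ 2 * i - k by
            obtain ⟨u, hu⟩ := hd; exact ⟨-u, by linarith⟩)]
          exact hk
        · obtain ⟨w, hw⟩ := keyT m0 hm0
          obtain ⟨k', hk', hd⟩ := hdouble (i - w)
          have hmem := hST k' m0 hk' hm0
          have e : (2 * π * (i:ℝ) / J + π / J - π / 2)
              = π * (((2 * i : ℤ) : ℝ) + 1) / J - π / 2 := by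
            push_cast; ring
          rw [e, refl_param_eq hJ (show (J:ℤ) ∣ 2 * i - (m0 + k') by
            obtain ⟨u, hu⟩ := hd; exact ⟨-u, by linarith⟩)]
          exact hmem
  · -- reverse direction
    rintro (hG | hG | ⟨hE, hG⟩) i j
    · refine ⟨rotIso (2 * π * ((j - i : ℤ)) / J), ?_, ?_⟩
      · show _ ∈ (G : Set Iso2)
        rw [hG]
        exact rot_mem_DJ J (j - i)
      · have := rot_edge J (j - i) i
        rwa [show i + (j - i) = j by ring] at this
    · refine ⟨rotIso (2 * π * ((j - i : ℤ)) / J), ?_, ?_⟩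
      · show _ ∈ (G : Set Iso2)
        rw [hG]
        exact ⟨j - i, rfl⟩
      · have := rot_edge J (j - i) i
        rwa [show i + (j - i) = j by ring] at this
    · rcases Int.even_or_odd (j - i) with ⟨n, hn⟩ | ⟨n, hn⟩
      · refine ⟨rotIso (2 * π * ((n + n : ℤ)) / J), ?_, ?_⟩
        · show _ ∈ (G : Set Iso2)
          rw [hG]
          refine Or.inl ⟨n, ?_⟩
          congr 1
          push_cast; ring
        · have := rot_edge J (n + n) i
          rwa [show i + (n + n) = j by linarith] at this
      · refine ⟨reflIso (π * ((2 * (i + n) : ℤ) + 1) / J - π / 2), ?_, ?_⟩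
        · show _ ∈ (G : Set Iso2)
          rw [hG]
          refine Or.inr ⟨i + n, ?_⟩
          congr 1
          push_cast; ring
        · have := refl_edge J (2 * (i + n)) i
          rwa [show 2 * (i + n) + 1 - i = j by linarith] at this
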